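/- Let G be a connected chordal graph and let S ⊆ V(G) be a vertex set such that the induced subgraph G[S] is connected. Then for all u, v ∈ S, every induced u-v path P in G satisfies V(P) ⊆ N[S]. -/
import Mathlib

/-- A graph is chordal if it has no induced cycle of length at least 4, i.e. no induced
subgraph isomorphic to `cycleGraph n` with `n ≥ 4`.  (Graph embeddings `↪g` reflect
adjacency, so their images are induced subgraphs.) -/
def SimpleGraph.IsChordal {V : Type*} (G : SimpleGraph V) : Prop :=
  ∀ n : ℕ, 4 ≤ n → IsEmpty (SimpleGraph.cycleGraph n ↪g G)

/-- A path is induced if the only edges of `G` between its vertices are its own edges. -/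
def SimpleGraph.Walk.IsInducedPath {V : Type*} {G : SimpleGraph V} {u v : V}
    (p : G.Walk u v) : Prop :=
  p.IsPath ∧ ∀ a ∈ p.support, ∀ b ∈ p.support, G.Adj a b → s(a, b) ∈ p.edges

namespace StmtAux

open SimpleGraph Walk

variable {V : Type*} {G : SimpleGraph V}

lemma getVert_mem_support {u v : V} (p : G.Walk u v) (m : ℕ) : p.getVert m ∈ p.support := by
  rcases le_or_gt m p.length with h | h
  · exact Walk.mem_support_iff_exists_getVert.2 ⟨m, rfl, h⟩
  · rw [p.getVert_of_length_le h.le]; exact p.end_mem_support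

lemma support_append_subset {a b c : V} (p : G.Walk a b) (q : G.Walk b c) :
    ∀ z ∈ (p.append q).support, z ∈ p.support ∨ z ∈ q.support := by
  intro z hz
  rw [Walk.support_append] at hz
  rcases List.mem_append.1 hz with h | h
  · exact Or.inl h
  · exact Or.inr (List.mem_of_mem_tail h)

/-- Extract the segment of a walk between positions `i` and `j`. -/
lemma exists_seg {u v : V} (p : G.Walk u v) :
    ∀ d i j, i + d = j → j ≤ p.length →
      ∃ q : G.Walk (p.getVert i) (p.getVert j), q.length = d ∧
        ∀ m, m ≤ d → q.getVert m = p.getVert (i + m) := by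
  intro d
  induction d with
  | zero =>
    intro i j hij hj
    obtain rfl : j = i := by omega
    refine ⟨Walk.nil, rfl, ?_⟩
    intro m hm
    obtain rfl : m = 0 := by omega
    simp
  | succ d ih =>
    intro i j hij hj
    have h1 : i < p.length := by omega
    obtain ⟨q, hql, hqv⟩ := ih (i + 1) j (by omega) hj
    refine ⟨Walk.cons (p.adj_getVert_succ h1) q, by simp [hql], ?_⟩
    intro m hm
    match m with
    | 0 => simp
    | Nat.succ m =>
      rw [Walk.getVert_cons_succ, hqv m (by omega)]
      congr 1
      omega

lemma shortcut_eq {a b : V} (p : G.Walk a b) {i j : ℕ} (hij : i < j) (hj : j ≤ p.length)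
    (h : p.getVert i = p.getVert j) :
    ∃ q : G.Walk a b, q.length + j = p.length + i ∧ ∀ z ∈ q.support, z ∈ p.support := by
  obtain ⟨q1, hq1l, hq1v⟩ := exists_seg p i 0 i (by omega) (by omega)
  obtain ⟨q2, hq2l, hq2v⟩ := exists_seg p (p.length - j) j p.length (by omega) le_rfl
  refine ⟨((q1.append (q2.copy h.symm rfl)).copy (p.getVert_zero) (p.getVert_length)),
    ?_, ?_⟩
  · simp only [Walk.length_copy, Walk.length_append, Walk.length_copy, hq1l, hq2l]
    omega
  · intro z hz
    rw [Walk.support_copy, Walk.support_append] at hz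
    rcases List.mem_append.1 hz with hz | hz
    · obtain ⟨m, hm, hml⟩ := Walk.mem_support_iff_exists_getVert.1 hz
      rw [hq1v m (by omega)] at hm
      exact hm ▸ getVert_mem_support p _
    · have hz' : z ∈ (q2.copy h.symm rfl).support := List.mem_of_mem_tail hz
      rw [Walk.support_copy] at hz'
      obtain ⟨m, hm, hml⟩ := Walk.mem_support_iff_exists_getVert.1 hz'
      rw [hq2v m (by omega)] at hm
      exact hm ▸ getVert_mem_support p _

lemma shortcut_adj {a b : V} (p : G.Walk a b) {i j : ℕ} (hij : i < j) (hj : j ≤ p.length)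
    (h : G.Adj (p.getVert i) (p.getVert j)) :
    ∃ q : G.Walk a b, q.length + j = p.length + i + 1 ∧ ∀ z ∈ q.support, z ∈ p.support := by
  obtain ⟨q1, hq1l, hq1v⟩ := exists_seg p i 0 i (by omega) (by omega)
  obtain ⟨q2, hq2l, hq2v⟩ := exists_seg p (p.length - j) j p.length (by omega) le_rfl
  refine ⟨((q1.append (Walk.cons h q2)).copy (p.getVert_zero) (p.getVert_length)), ?_, ?_⟩
  · simp only [Walk.length_copy, Walk.length_append, Walk.length_cons, hq1l, hq2l]
    omega
  · intro z hz
    rw [Walk.support_copy, Walk.support_append] at hz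
    rcases List.mem_append.1 hz with hz | hz
    · obtain ⟨m, hm, hml⟩ := Walk.mem_support_iff_exists_getVert.1 hz
      rw [hq1v m (by omega)] at hm
      exact hm ▸ getVert_mem_support p _
    · have hz' : z ∈ (Walk.cons h q2).support := List.mem_of_mem_tail hz
      rw [Walk.support_cons, List.mem_cons] at hz'
      rcases hz' with hz' | hz'
      · rw [hz']; exact getVert_mem_support p i
      · obtain ⟨m, hm, hml⟩ := Walk.mem_support_iff_exists_getVert.1 hz'
        rw [hq2v m (by omega)] at hm
        exact hm ▸ getVert_mem_support p _

/-- A minimum-length walk from `a` to `b` within a vertex set `T` has pairwise-distinct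
vertices and no chords. -/
lemma exists_min_walk {a b : V} (T : Set V)
    (h : ∃ w : G.Walk a b, ∀ z ∈ w.support, z ∈ T) :
    ∃ w : G.Walk a b, (∀ z ∈ w.support, z ∈ T) ∧
      (∀ i j, i < j → j ≤ w.length → w.getVert i ≠ w.getVert j) ∧
      (∀ i j, i + 1 < j → j ≤ w.length → ¬ G.Adj (w.getVert i) (w.getVert j)) := by
  classical
  obtain ⟨w0, hw0⟩ := h
  have hQ : ∃ n, ∃ w : G.Walk a b, w.length = n ∧ ∀ z ∈ w.support, z ∈ T :=
    ⟨w0.length, w0, rfl, hw0⟩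
  obtain ⟨w, hwlen, hwT⟩ := Nat.find_spec hQ
  refine ⟨w, hwT, ?_, ?_⟩
  · intro i j hij hj heq
    obtain ⟨q, hqlen, hqsup⟩ := shortcut_eq w hij hj heq
    have hq : ∃ w' : G.Walk a b, w'.length = q.length ∧ ∀ z ∈ w'.support, z ∈ T :=
      ⟨q, rfl, fun z hz => hwT z (hqsup z hz)⟩
    have := Nat.find_min' hQ hq
    omega
  · intro i j hij hj hadj
    obtain ⟨q, hqlen, hqsup⟩ := shortcut_adj w (by omega) hj hadj
    have hq : ∃ w' : G.Walk a b, w'.length = q.length ∧ ∀ z ∈ w'.support, z ∈ T :=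
      ⟨q, rfl, fun z hz => hwT z (hqsup z hz)⟩
    have := Nat.find_min' hQ hq
    omega

lemma path_getVert_inj {u v : V} {p : G.Walk u v} (hp : p.IsPath) :
    ∀ i j, i ≤ p.length → j ≤ p.length → p.getVert i = p.getVert j → i = j := by
  induction p with
  | nil => intro i j hi hj _; simp only [Walk.length_nil, Nat.le_zero] at hi hj; omega
  | cons hadj q ih =>
    rw [Walk.cons_isPath_iff] at hp
    intro i j hi hj heq
    match i, j with
    | 0, 0 => rfl
    | 0, Nat.succ j =>
      rw [Walk.getVert_zero, Walk.getVert_cons_succ] at heq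
      exact absurd (Walk.mem_support_iff_exists_getVert.2 ⟨j, heq.symm, by simpa using hj⟩) hp.2
    | Nat.succ i, 0 =>
      rw [Walk.getVert_zero, Walk.getVert_cons_succ] at heq
      exact absurd (Walk.mem_support_iff_exists_getVert.2 ⟨i, heq, by simpa using hi⟩) hp.2
    | Nat.succ i, Nat.succ j =>
      rw [Walk.getVert_cons_succ, Walk.getVert_cons_succ] at heq
      have := ih hp.1 i j (by simpa using hi) (by simpa using hj) heq
      omega

lemma edge_position {u v a b : V} (p : G.Walk u v) (h : s(a, b) ∈ p.edges) :
    ∃ k, k < p.length ∧ ((p.getVert k = a ∧ p.getVert (k + 1) = b) ∨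
      (p.getVert k = b ∧ p.getVert (k + 1) = a)) := by
  induction p with
  | nil => simp at h
  | @cons x y z hadj q ih =>
    rw [Walk.edges_cons, List.mem_cons] at h
    rcases h with h | h
    · refine ⟨0, by simp, ?_⟩
      rw [Sym2.eq_iff] at h
      rcases h with ⟨rfl, rfl⟩ | ⟨rfl, rfl⟩
      · exact Or.inl ⟨by simp, by simp [Walk.getVert_cons_succ]⟩
      · exact Or.inr ⟨by simp, by simp [Walk.getVert_cons_succ]⟩
    · obtain ⟨k, hk, hcase⟩ := ih h
      exact ⟨k + 1, by simpa using hk, by simpa [Walk.getVert_cons_succ] using hcase⟩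

lemma induced_position {u v : V} {p : G.Walk u v} (hp : p.IsInducedPath) :
    ∀ i j, i ≤ p.length → j ≤ p.length → G.Adj (p.getVert i) (p.getVert j) →
      j = i + 1 ∨ i = j + 1 := by
  intro i j hi hj hadj
  have he := hp.2 _ (getVert_mem_support p i) _ (getVert_mem_support p j) hadj
  obtain ⟨k, hk, hcase⟩ := edge_position p he
  rcases hcase with ⟨h1, h2⟩ | ⟨h1, h2⟩
  · have e1 := path_getVert_inj hp.1 k i hk.le hi h1
    have e2 := path_getVert_inj hp.1 (k + 1) j hk hj h2
    omega
  · have e1 := path_getVert_inj hp.1 k j hk.le hj h1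
    have e2 := path_getVert_inj hp.1 (k + 1) i hk hi h2
    omega

lemma mod_ite {n d : ℕ} (h : d < 2 * n) : d % n = if n ≤ d then d - n else d := by
  split
  · next hle => rw [Nat.mod_eq_sub_mod hle, Nat.mod_eq_of_lt (by omega)]
  · next hlt => exact Nat.mod_eq_of_lt (by omega)

lemma cyc_adj {n : ℕ} (hn : 2 ≤ n) (i j : Fin n) :
    (SimpleGraph.cycleGraph n).Adj i j ↔
      (j.val = i.val + 1 ∨ i.val = j.val + 1 ∨ (i.val = 0 ∧ j.val = n - 1) ∨
        (j.val = 0 ∧ i.val = n - 1)) := by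
  have hi := i.isLt
  have hj := j.isLt
  rw [SimpleGraph.cycleGraph_adj', Fin.sub_def, Fin.sub_def]
  show ((n - j.val + i.val) % n = 1 ∨ (n - i.val + j.val) % n = 1) ↔ _
  rw [mod_ite (by omega), mod_ite (by omega)]
  split_ifs <;> omega

/-- From two internally disjoint, individually induced, mutually non-adjacent
paths of length at least two with common endpoints, build an induced cycle. -/
lemma cycle_embedding {a b : V} (Q R : G.Walk a b)
    (hQ2 : 2 ≤ Q.length) (hR2 : 2 ≤ R.length)
    (Qinj : ∀ i j, i < j → j ≤ Q.length → Q.getVert i ≠ Q.getVert j)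
    (Rinj : ∀ i j, i < j → j ≤ R.length → R.getVert i ≠ R.getVert j)
    (Qind : ∀ i j, i + 1 < j → j ≤ Q.length → ¬ G.Adj (Q.getVert i) (Q.getVert j))
    (Rind : ∀ i j, i + 1 < j → j ≤ R.length → ¬ G.Adj (R.getVert i) (R.getVert j))
    (sep : ∀ i j, 0 < i → i < Q.length → 0 < j → j < R.length →
      Q.getVert i ≠ R.getVert j ∧ ¬ G.Adj (Q.getVert i) (R.getVert j)) :
    ∃ n, 4 ≤ n ∧ Nonempty (SimpleGraph.cycleGraph n ↪g G) := by
  set n := Q.length + R.length with hn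
  set g : ℕ → V := fun m => if m ≤ Q.length then Q.getVert m else R.getVert (n - m) with hg
  have hF1 : ∀ m, m ≤ Q.length → g m = Q.getVert m := by
    intro m hm; simp [hg, hm]
  have hF2 : ∀ m, Q.length ≤ m → g m = R.getVert (n - m) := by
    intro m hm
    rcases eq_or_lt_of_le hm with rfl | h
    · have h1 : n - Q.length = R.length := by omega
      rw [h1, Walk.getVert_length, hF1 Q.length le_rfl, Walk.getVert_length]
    · simp [hg, Nat.not_le.2 h]
  have h00 : Q.getVert 0 = R.getVert 0 := by simp
  have hgn : g n = g 0 := by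
    rw [hF2 n (by omega), hF1 0 (by omega), Nat.sub_self, h00]
  have adj_succ : ∀ m, m + 1 ≤ n → G.Adj (g m) (g (m + 1)) := by
    intro m hm
    rcases le_or_gt (m + 1) Q.length with h | h
    · rw [hF1 m (by omega), hF1 (m + 1) h]
      exact Q.adj_getVert_succ (by omega)
    · rw [hF2 m (by omega), hF2 (m + 1) (by omega)]
      have he : n - m = (n - (m + 1)) + 1 := by omega
      rw [he]
      exact (R.adj_getVert_succ (by omega)).symm
  have ginj : ∀ i j, i < j → j < n → g i ≠ g j := by
    intro i j hij hjn
    rcases le_or_gt j Q.length with hj | hj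
    · rw [hF1 i (by omega), hF1 j hj]
      exact Qinj i j hij hj
    · rcases le_or_gt Q.length i with hi | hi
      · rw [hF2 i hi, hF2 j (by omega)]
        intro heq
        exact Rinj (n - j) (n - i) (by omega) (by omega) heq.symm
      · rcases Nat.eq_zero_or_pos i with rfl | hi0
        · rw [hF1 0 (by omega), hF2 j (by omega), h00]
          exact Rinj 0 (n - j) (by omega) (by omega)
        · rw [hF1 i (by omega), hF2 j (by omega)]
          exact (sep i (n - j) hi0 hi (by omega) (by omega)).1
  have gadj_back : ∀ i j, i < j → j < n → G.Adj (g i) (g j) →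
      j = i + 1 ∨ (i = 0 ∧ j = n - 1) := by
    intro i j hij hjn hadj
    rcases le_or_gt j Q.length with hj | hj
    · rw [hF1 i (by omega), hF1 j hj] at hadj
      left
      by_contra hne
      exact Qind i j (by omega) hj hadj
    · rcases le_or_gt Q.length i with hi | hi
      · rw [hF2 i hi, hF2 j (by omega)] at hadj
        left
        by_contra hne
        exact Rind (n - j) (n - i) (by omega) (by omega) hadj.symm
      · rcases Nat.eq_zero_or_pos i with rfl | hi0
        · rw [hF1 0 (by omega), hF2 j (by omega), h00] at hadj
          right
          refine ⟨rfl, ?_⟩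
          by_contra hne
          exact Rind 0 (n - j) (by omega) (by omega) hadj
        · rw [hF1 i (by omega), hF2 j (by omega)] at hadj
          exact absurd hadj (sep i (n - j) hi0 hi (by omega) (by omega)).2
  refine ⟨n, by omega, ⟨⟨⟨fun i => g i.val, ?_⟩, ?_⟩⟩⟩
  · intro i j heq
    have hi := i.isLt
    have hj := j.isLt
    rcases lt_trichotomy i.val j.val with h | h | h
    · exact absurd heq (ginj _ _ h hj)
    · exact Fin.ext h
    · exact absurd heq.symm (ginj _ _ h hi)
  · intro i j
    have hi := i.isLt
    have hj := j.isLt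
    show G.Adj (g i.val) (g j.val) ↔ _
    rw [cyc_adj (by omega)]
    constructor
    · intro hadj
      rcases lt_trichotomy i.val j.val with h | h | h
      · rcases gadj_back _ _ h hj hadj with h' | ⟨h1, h2⟩
        · exact Or.inl h'
        · exact Or.inr (Or.inr (Or.inl ⟨h1, h2⟩))
      · exfalso
        have hgeq : g i.val = g j.val := by rw [h]
        rw [hgeq] at hadj
        exact G.irrefl hadj
      · rcases gadj_back _ _ h hi hadj.symm with h' | ⟨h1, h2⟩
        · exact Or.inr (Or.inl h')
        · exact Or.inr (Or.inr (Or.inr ⟨h1, h2⟩))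
    · intro hc
      rcases hc with h | h | ⟨h1, h2⟩ | ⟨h1, h2⟩
      · rw [h]
        exact adj_succ i.val (by omega)
      · rw [h]
        exact (adj_succ j.val (by omega)).symm
      · rw [h1, h2]
        have h3 := adj_succ (n - 1) (by omega)
        rw [show n - 1 + 1 = n by omega, hgn] at h3
        exact h3.symm
      · rw [h1, h2]
        have h3 := adj_succ (n - 1) (by omega)
        rw [show n - 1 + 1 = n by omega, hgn] at h3
        exact h3

end StmtAux

/-- in a connected chordal graph `G`, if `S` induces a connected subgraph
and `u, v ∈ S`, then every induced `u`-`v` path of `G` stays inside the closed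
neighborhood `N[S]`. -/
theorem stmt5 {V : Type*} (G : SimpleGraph V) (hG : G.Connected) (hch : G.IsChordal)
    (S : Set V) (hS : (G.induce S).Connected)
    (u v : V) (hu : u ∈ S) (hv : v ∈ S)
    (P : G.Walk u v) (hP : P.IsInducedPath) :
    ∀ x ∈ P.support, x ∈ S ∨ ∃ y ∈ S, G.Adj x y := by
  classical
  intro x hx
  by_contra hxN
  obtain ⟨k, hkx, hk⟩ := SimpleGraph.Walk.mem_support_iff_exists_getVert.1 hx
  subst hkx
  set InN : V → Prop := fun z => z ∈ S ∨ ∃ y ∈ S, G.Adj z y with hInN_def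
  have hkInN : ¬ InN (P.getVert k) := hxN
  have h0 : InN (P.getVert 0) := by
    rw [SimpleGraph.Walk.getVert_zero]
    exact Or.inl hu
  have hlenN : InN (P.getVert P.length) := by
    rw [SimpleGraph.Walk.getVert_length]
    exact Or.inl hv
  set ia := Nat.findGreatest (fun i => InN (P.getVert i)) k with hia_def
  have hia_le : ia ≤ k := Nat.findGreatest_le k
  have hiaN : InN (P.getVert ia) :=
    Nat.findGreatest_spec (P := fun i => InN (P.getVert i)) (Nat.zero_le k) h0
  have hia_max : ∀ m, ia < m → m ≤ k → ¬ InN (P.getVert m) :=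
    fun m h1 h2 => Nat.findGreatest_is_greatest h1 h2
  have hia_lt : ia < k := lt_of_le_of_ne hia_le (fun h => hkInN (h ▸ hiaN))
  have hex : ∃ d, InN (P.getVert (k + d)) :=
    ⟨P.length - k, by rw [Nat.add_sub_cancel' hk]; exact hlenN⟩
  set d0 := Nat.find hex with hd0
  set ib := k + d0 with hib_def
  have hibN : InN (P.getVert ib) := Nat.find_spec hex
  have hib_le : ib ≤ P.length := by
    have := Nat.find_min' hex (m := P.length - k)
      (by rw [Nat.add_sub_cancel' hk]; exact hlenN)
    omega
  have hk_lt : k < ib := by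
    rcases Nat.eq_zero_or_pos d0 with h | h
    · exfalso
      apply hkInN
      have h2 := hibN
      rw [hib_def, h, Nat.add_zero] at h2
      exact h2
    · omega
  have hib_min : ∀ m, k ≤ m → m < ib → ¬ InN (P.getVert m) := by
    intro m h1 h2 hc
    have h3 := Nat.find_min hex (m := m - k) (by omega)
    rw [Nat.add_sub_cancel' h1] at h3
    exact h3 hc
  have hgap : ∀ m, ia < m → m < ib → ¬ InN (P.getVert m) := by
    intro m h1 h2
    rcases le_or_gt m k with h | h
    · exact hia_max m h1 h
    · exact hib_min m h.le h2
  have hPinj := StmtAux.path_getVert_inj hP.1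
  have hab_ne : P.getVert ia ≠ P.getVert ib := by
    intro h
    have := hPinj ia ib (by omega) hib_le h
    omega
  have hab_nadj : ¬ G.Adj (P.getVert ia) (P.getVert ib) := by
    intro h
    rcases StmtAux.induced_position hP ia ib (by omega) hib_le h with h' | h' <;> omega
  -- the segment of P between positions ia and ib
  obtain ⟨Q, hQlen, hQv⟩ := StmtAux.exists_seg P (ib - ia) ia ib (by omega) hib_le
  -- neighbors in S of the two endpoints
  have hnbr : ∀ c : V, InN c → ∃ c' ∈ S, c = c' ∨ G.Adj c c' := by
    intro c hc
    rcases hc with hc | ⟨y, hy, hadj⟩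
    · exact ⟨c, hc, Or.inl rfl⟩
    · exact ⟨y, hy, Or.inr hadj⟩
  obtain ⟨a', ha'S, ha'⟩ := hnbr _ hiaN
  obtain ⟨b', hb'S, hb'⟩ := hnbr _ hibN
  -- a walk from a to b inside T
  set T : Set V := insert (P.getVert ia) (insert (P.getVert ib) S) with hT
  have hST : S ⊆ T := fun z hz => Set.mem_insert_iff.2 (Or.inr (Set.mem_insert_iff.2 (Or.inr hz)))
  have hwalk : ∃ w : G.Walk (P.getVert ia) (P.getVert ib), ∀ z ∈ w.support, z ∈ T := by
    obtain ⟨w1⟩ := hS.preconnected ⟨a', ha'S⟩ ⟨b', hb'S⟩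
    have hw1' : ∀ z ∈ (w1.map (SimpleGraph.Embedding.induce S).toHom).support, z ∈ S := by
      intro z hz
      rw [SimpleGraph.Walk.support_map] at hz
      obtain ⟨z', hz', rfl⟩ := List.mem_map.1 hz
      exact z'.2
    obtain ⟨wa, hwa⟩ : ∃ wa : G.Walk (P.getVert ia) a', ∀ z ∈ wa.support, z ∈ T := by
      rcases ha' with h | h
      · refine ⟨SimpleGraph.Walk.nil.copy rfl h, ?_⟩
        intro z hz
        rw [SimpleGraph.Walk.support_copy, SimpleGraph.Walk.support_nil] at hz
        simp only [List.mem_singleton] at hz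
        rw [hz]
        exact Set.mem_insert _ _
      · refine ⟨SimpleGraph.Walk.cons h SimpleGraph.Walk.nil, ?_⟩
        intro z hz
        rw [SimpleGraph.Walk.support_cons, SimpleGraph.Walk.support_nil] at hz
        rcases List.mem_cons.1 hz with h' | h'
        · rw [h']; exact Set.mem_insert _ _
        · simp only [List.mem_singleton] at h'
          rw [h']; exact hST ha'S
    obtain ⟨wb, hwb⟩ : ∃ wb : G.Walk b' (P.getVert ib), ∀ z ∈ wb.support, z ∈ T := by
      rcases hb' with h | h
      · refine ⟨SimpleGraph.Walk.nil.copy rfl h.symm, ?_⟩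
        intro z hz
        rw [SimpleGraph.Walk.support_copy, SimpleGraph.Walk.support_nil] at hz
        simp only [List.mem_singleton] at hz
        rw [hz, ← h]
        exact Set.mem_insert_iff.2 (Or.inr (Set.mem_insert _ _))
      · refine ⟨SimpleGraph.Walk.cons h.symm SimpleGraph.Walk.nil, ?_⟩
        intro z hz
        rw [SimpleGraph.Walk.support_cons, SimpleGraph.Walk.support_nil] at hz
        rcases List.mem_cons.1 hz with h' | h'
        · rw [h']; exact hST hb'S
        · simp only [List.mem_singleton] at h'
          rw [h']; exact Set.mem_insert_iff.2 (Or.inr (Set.mem_insert _ _))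
    refine ⟨wa.append ((w1.map (SimpleGraph.Embedding.induce S).toHom).append wb), ?_⟩
    intro z hz
    rcases StmtAux.support_append_subset _ _ z hz with h | h
    · exact hwa z h
    · rcases StmtAux.support_append_subset _ _ z h with h' | h'
      · exact hST (hw1' z h')
      · exact hwb z h'
  obtain ⟨R, hRT, hRinj, hRind⟩ := StmtAux.exists_min_walk T hwalk
  have hR2 : 2 ≤ R.length := by
    by_contra hcon
    have : R.length = 0 ∨ R.length = 1 := by omega
    rcases this with h | h
    · apply hab_ne
      rw [← R.getVert_zero, ← h, R.getVert_length]
    · apply hab_nadj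
      have h1 := R.adj_getVert_succ (i := 0) (by omega)
      rw [R.getVert_zero, show (0 + 1 : ℕ) = R.length from by omega, R.getVert_length] at h1
      exact h1
  have hRintS : ∀ t, 0 < t → t < R.length → R.getVert t ∈ S := by
    intro t h1 h2
    have hzT : R.getVert t ∈ T := hRT _ (StmtAux.getVert_mem_support R t)
    rcases Set.mem_insert_iff.1 hzT with h | h
    · exfalso
      exact hRinj 0 t h1 (by omega) (by rw [R.getVert_zero]; exact h.symm)
    · rcases Set.mem_insert_iff.1 h with h | h
      · exfalso
        apply hRinj t R.length h2 le_rfl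
        rw [R.getVert_length]
        exact h
      · exact h
  have hQ2 : 2 ≤ Q.length := by omega
  have hQinj : ∀ i j, i < j → j ≤ Q.length → Q.getVert i ≠ Q.getVert j := by
    intro i j h1 h2 heq
    rw [hQv i (by omega), hQv j (by omega)] at heq
    have := hPinj (ia + i) (ia + j) (by omega) (by omega) heq
    omega
  have hQind : ∀ i j, i + 1 < j → j ≤ Q.length → ¬ G.Adj (Q.getVert i) (Q.getVert j) := by
    intro i j h1 h2 hadj
    rw [hQv i (by omega), hQv j (by omega)] at hadj
    rcases StmtAux.induced_position hP (ia + i) (ia + j) (by omega) (by omega) hadj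
      with h | h <;> omega
  have hsep : ∀ i j, 0 < i → i < Q.length → 0 < j → j < R.length →
      Q.getVert i ≠ R.getVert j ∧ ¬ G.Adj (Q.getVert i) (R.getVert j) := by
    intro i j h1 h2 h3 h4
    have hQm : ¬ InN (Q.getVert i) := by
      rw [hQv i (by omega)]
      exact hgap (ia + i) (by omega) (by omega)
    have hRm : R.getVert j ∈ S := hRintS j h3 h4
    constructor
    · intro heq
      exact hQm (Or.inl (heq ▸ hRm))
    · intro hadj
      exact hQm (Or.inr ⟨R.getVert j, hRm, hadj⟩)
  obtain ⟨n, hn4, ⟨emb⟩⟩ :=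
    StmtAux.cycle_embedding Q R hQ2 hR2 hQinj hRinj hQind hRind hsep
  exact (hch n hn4).false emb
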